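/- For an integer k ≥ 2, let H be a k-uniform hypergraph with n vertices and p·C(n,k) edges, where p = e(H)/C(n,k). Then there is an ordering v_1, …, v_n of the vertices such that for every ℓ ∈ {1,…,n}, e({v_1,…,v_ℓ}) − p·C(ℓ,k) ≤ p·C(n−1,k−1) and p·C(ℓ,k) − e({v_1,…,v_ℓ}) ≤ (1−p)·C(n−1,k−1). -/

import Mathlib

lemma hyp_aux_filter_erase {n : ℕ} (H : Finset (Finset (Fin n))) (S : Finset (Fin n)) (v : Fin n) :
    H.filter (fun A => A ⊆ S.erase v) = (H.filter (fun A => A ⊆ S)).filter (fun A => v ∉ A) := by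
  rw [Finset.filter_filter]
  apply Finset.filter_congr
  intro A _
  simp [Finset.subset_erase]

lemma hyp_aux_sum {n k : ℕ} (H : Finset (Finset (Fin n))) (hk : ∀ e ∈ H, e.card = k)
    (S : Finset (Fin n)) :
    ∑ v ∈ S, (H.filter (fun A => A ⊆ S.erase v)).card
      = (H.filter (fun A => A ⊆ S)).card * (S.card - k) := by
  have h1 : ∀ v ∈ S, (H.filter (fun A => A ⊆ S.erase v)).card
      = ∑ A ∈ H.filter (fun A => A ⊆ S), if v ∉ A then 1 else 0 := by
    intro v _
    rw [hyp_aux_filter_erase, Finset.card_filter]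
  rw [Finset.sum_congr rfl h1, Finset.sum_comm]
  have h2 : ∀ A ∈ H.filter (fun A => A ⊆ S),
      (∑ v ∈ S, if v ∉ A then 1 else 0) = S.card - k := by
    intro A hA
    have hAS : A ⊆ S := (Finset.mem_filter.mp hA).2
    have : (∑ v ∈ S, if v ∉ A then 1 else 0) = (S.filter (fun v => v ∉ A)).card :=
      (Finset.card_filter _ _).symm
    rw [this]
    have h3 : S.filter (fun v => v ∉ A) = S \ A := by
      ext x; simp [Finset.mem_sdiff]
    rw [h3, Finset.card_sdiff_of_subset hAS, hk A (Finset.mem_filter.mp hA).1]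
  rw [Finset.sum_congr rfl h2, Finset.sum_const, smul_eq_mul]

lemma hyp_aux_deg {n k : ℕ} (H : Finset (Finset (Fin n))) (hk : ∀ e ∈ H, e.card = k)
    (S : Finset (Fin n)) (v : Fin n) (hv : v ∈ S) :
    ((H.filter (fun A => A ⊆ S)).filter (fun A => v ∈ A)).card ≤ (S.card - 1).choose (k - 1) := by
  have h := Finset.card_le_card_of_injOn (fun A => A.erase v)
    (s := (H.filter (fun A => A ⊆ S)).filter (fun A => v ∈ A))
    (t := (S.erase v).powersetCard (k - 1)) ?_ ?_
  · rwa [Finset.card_powersetCard, Finset.card_erase_of_mem hv] at h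
  · intro A hA
    simp only [Finset.mem_coe, Finset.mem_filter] at hA ⊢
    rw [Finset.mem_powersetCard]
    exact ⟨Finset.erase_subset_erase v hA.1.2,
      by rw [Finset.card_erase_of_mem hA.2, hk A hA.1.1]⟩
  · intro A hA B hB hAB
    simp only [Finset.coe_filter, Set.mem_setOf_eq] at hA hB
    have : insert v (A.erase v) = insert v (B.erase v) := by
      simp only at hAB; rw [hAB]
    rwa [Finset.insert_erase hA.2, Finset.insert_erase hB.2] at this

lemma hyp_aux_split {n : ℕ} (H : Finset (Finset (Fin n))) (S : Finset (Fin n)) (v : Fin n) :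
    (H.filter (fun A => A ⊆ S)).card
      = (H.filter (fun A => A ⊆ S.erase v)).card
        + ((H.filter (fun A => A ⊆ S)).filter (fun A => v ∈ A)).card := by
  have h := Finset.card_filter_add_card_filter_not
    (s := H.filter (fun A => A ⊆ S)) (p := fun A => v ∈ A)
  rw [hyp_aux_filter_erase]
  omega

lemma hyp_step {n k : ℕ} (hk1 : 1 ≤ k) (H : Finset (Finset (Fin n)))
    (hk : ∀ e ∈ H, e.card = k) (p : ℝ) (hp0 : 0 ≤ p) (hp1 : p ≤ 1)
    (S : Finset (Fin n)) (hS : S.Nonempty) (hSn : S.card ≤ n)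
    (h1 : ((H.filter (fun A => A ⊆ S)).card : ℝ) - p * (S.card.choose k)
        ≤ p * ((n - 1).choose (k - 1)))
    (h2 : p * (S.card.choose k) - ((H.filter (fun A => A ⊆ S)).card : ℝ)
        ≤ (1 - p) * ((n - 1).choose (k - 1))) :
    ∃ v ∈ S,
      (((H.filter (fun A => A ⊆ S.erase v)).card : ℝ) - p * (((S.card - 1).choose k))
          ≤ p * ((n - 1).choose (k - 1))) ∧
      (p * (((S.card - 1).choose k))
          - ((H.filter (fun A => A ⊆ S.erase v)).card : ℝ)
          ≤ (1 - p) * ((n - 1).choose (k - 1))) := by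
  classical
  obtain ⟨m, hm⟩ : ∃ m, S.card = m + 1 := ⟨S.card - 1, by have := Finset.card_pos.mpr hS; omega⟩
  have hCnn : (0:ℝ) ≤ ((n - 1).choose (k - 1) : ℝ) := by positivity
  have hmc : ((m.choose (k - 1) : ℕ) : ℝ) ≤ ((n - 1).choose (k - 1) : ℝ) := by
    exact_mod_cast Nat.choose_le_choose (k - 1) (show m ≤ n - 1 by omega)
  have hpascal : S.card.choose k = m.choose k + m.choose (k - 1) := by
    obtain ⟨j, rfl⟩ : ∃ j, k = j + 1 := ⟨k - 1, by omega⟩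
    rw [hm, Nat.choose_succ_succ]
    simp
    omega
  have hpasR : ((S.card.choose k : ℕ) : ℝ) = (m.choose k : ℝ) + (m.choose (k - 1) : ℝ) := by
    exact_mod_cast hpascal
  have hpoint : ∀ v ∈ S,
      (((H.filter (fun A => A ⊆ S)).card : ℝ) - p * (S.card.choose k))
          - (1 - p) * ((n - 1).choose (k - 1))
        ≤ ((H.filter (fun A => A ⊆ S.erase v)).card : ℝ) - p * (m.choose k) ∧
      ((H.filter (fun A => A ⊆ S.erase v)).card : ℝ) - p * (m.choose k)
        ≤ (((H.filter (fun A => A ⊆ S)).card : ℝ) - p * (S.card.choose k))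
          + p * ((n - 1).choose (k - 1)) := by
    intro v hv
    have hsplit := hyp_aux_split H S v
    have hdeg := hyp_aux_deg H hk S v hv
    rw [hm] at hdeg
    simp only [Nat.add_sub_cancel] at hdeg
    have hdegR : (((H.filter (fun A => A ⊆ S)).filter (fun A => v ∈ A)).card : ℝ)
        ≤ ((m.choose (k - 1) : ℕ) : ℝ) := by exact_mod_cast hdeg
    have hdeg0 : (0:ℝ) ≤ (((H.filter (fun A => A ⊆ S)).filter (fun A => v ∈ A)).card : ℝ) := by
      positivity
    have hsplitR : ((H.filter (fun A => A ⊆ S)).card : ℝ)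
        = ((H.filter (fun A => A ⊆ S.erase v)).card : ℝ)
          + (((H.filter (fun A => A ⊆ S)).filter (fun A => v ∈ A)).card : ℝ) := by
      exact_mod_cast hsplit
    have hp1' : (0:ℝ) ≤ 1 - p := by linarith
    constructor
    · nlinarith [mul_le_mul_of_nonneg_left hmc hp1', mul_le_mul_of_nonneg_left hdegR hp1']
    · nlinarith [mul_le_mul_of_nonneg_left hmc hp0]
  have hchR : (m.choose k : ℝ) * (S.card : ℝ)
      = (S.card.choose k : ℝ) * ((S.card - k : ℕ) : ℝ) := by
    have := Nat.choose_mul_succ_eq m k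
    rw [← hm] at this
    exact_mod_cast this
  have hsum : ∑ v ∈ S, (((H.filter (fun A => A ⊆ S.erase v)).card : ℝ) - p * (m.choose k))
      = ((S.card - k : ℕ) : ℝ)
        * (((H.filter (fun A => A ⊆ S)).card : ℝ) - p * (S.card.choose k)) := by
    have h1R : ∑ v ∈ S, ((H.filter (fun A => A ⊆ S.erase v)).card : ℝ)
        = ((H.filter (fun A => A ⊆ S)).card : ℝ) * ((S.card - k : ℕ) : ℝ) := by
      exact_mod_cast congrArg (Nat.cast : ℕ → ℝ) (hyp_aux_sum H hk S)
    rw [Finset.sum_sub_distrib, h1R, Finset.sum_const, nsmul_eq_mul]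
    linear_combination (-p) * hchR
  have hℓk : ((S.card - k : ℕ) : ℝ) ≤ (S.card : ℝ) := by exact_mod_cast Nat.sub_le S.card k
  -- choose a good vertex
  have hest : ∃ v ∈ S,
      ((((H.filter (fun A => A ⊆ S.erase v)).card : ℝ) - p * (m.choose k)
          ≤ (((H.filter (fun A => A ⊆ S)).card : ℝ) - p * (S.card.choose k))
        ∧ 0 ≤ (((H.filter (fun A => A ⊆ S)).card : ℝ) - p * (S.card.choose k)))
      ∨ ((((H.filter (fun A => A ⊆ S)).card : ℝ) - p * (S.card.choose k))
          ≤ ((H.filter (fun A => A ⊆ S.erase v)).card : ℝ) - p * (m.choose k)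
        ∧ (((H.filter (fun A => A ⊆ S)).card : ℝ) - p * (S.card.choose k)) ≤ 0)) := by
    rcases le_or_gt 0 (((H.filter (fun A => A ⊆ S)).card : ℝ) - p * (S.card.choose k))
      with hF0 | hF0
    · obtain ⟨v, hv, hgv⟩ := Finset.exists_le_of_sum_le
        (f := fun v => ((H.filter (fun A => A ⊆ S.erase v)).card : ℝ) - p * (m.choose k))
        (g := fun _ => ((H.filter (fun A => A ⊆ S)).card : ℝ) - p * (S.card.choose k)) hS
        (by rw [hsum, Finset.sum_const, nsmul_eq_mul]
            exact mul_le_mul_of_nonneg_right hℓk hF0)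
      exact ⟨v, hv, Or.inl ⟨hgv, hF0⟩⟩
    · obtain ⟨v, hv, hgv⟩ := Finset.exists_le_of_sum_le
        (f := fun _ => ((H.filter (fun A => A ⊆ S)).card : ℝ) - p * (S.card.choose k))
        (g := fun v => ((H.filter (fun A => A ⊆ S.erase v)).card : ℝ) - p * (m.choose k)) hS
        (by rw [hsum, Finset.sum_const, nsmul_eq_mul]
            nlinarith)
      exact ⟨v, hv, Or.inr ⟨hgv, le_of_lt hF0⟩⟩
  obtain ⟨v, hv, hcase⟩ := hest
  obtain ⟨hlo, hhi⟩ := hpoint v hv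
  have hm' : S.card - 1 = m := by omega
  rw [hm']
  refine ⟨v, hv, ?_, ?_⟩
  · rcases hcase with ⟨hle, hF0⟩ | ⟨hge, hF0⟩ <;> linarith
  · rcases hcase with ⟨hle, hF0⟩ | ⟨hge, hF0⟩ <;> linarith

lemma hyp_chain {n k : ℕ} (hk1 : 1 ≤ k) (H : Finset (Finset (Fin n)))
    (hk : ∀ e ∈ H, e.card = k) (p : ℝ) (hp0 : 0 ≤ p) (hp1 : p ≤ 1)
    (hE : (H.card : ℝ) = p * (n.choose k)) :
    ∃ T : ℕ → Finset (Fin n),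
      (∀ ℓ, ℓ ≤ n → (T ℓ).card = ℓ) ∧
      (∀ ℓ, ℓ < n → T ℓ ⊆ T (ℓ + 1)) ∧
      (∀ ℓ, ℓ ≤ n →
        (((H.filter (fun A => A ⊆ T ℓ)).card : ℝ) - p * (ℓ.choose k)
            ≤ p * ((n - 1).choose (k - 1))) ∧
        (p * (ℓ.choose k) - ((H.filter (fun A => A ⊆ T ℓ)).card : ℝ)
            ≤ (1 - p) * ((n - 1).choose (k - 1)))) := by
  classical
  have key : ∀ d, d ≤ n → ∃ T : ℕ → Finset (Fin n),
      (∀ ℓ, n - d ≤ ℓ → ℓ ≤ n → (T ℓ).card = ℓ ∧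
        (((H.filter (fun A => A ⊆ T ℓ)).card : ℝ) - p * (ℓ.choose k)
            ≤ p * ((n - 1).choose (k - 1))) ∧
        (p * (ℓ.choose k) - ((H.filter (fun A => A ⊆ T ℓ)).card : ℝ)
            ≤ (1 - p) * ((n - 1).choose (k - 1)))) ∧
      (∀ ℓ, n - d ≤ ℓ → ℓ < n → T ℓ ⊆ T (ℓ + 1)) := by
    intro d
    induction d with
    | zero =>
      intro _
      refine ⟨fun _ => Finset.univ, ?_, ?_⟩
      · intro ℓ hℓ1 hℓ2
        have hℓ : ℓ = n := by omega
        subst hℓ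
        have hfil : H.filter (fun A => A ⊆ (Finset.univ : Finset (Fin ℓ))) = H :=
          Finset.filter_true_of_mem (fun A _ => Finset.subset_univ A)
        have hCnn : (0:ℝ) ≤ (((ℓ - 1).choose (k - 1) : ℕ) : ℝ) := by positivity
        refine ⟨by simp, ?_, ?_⟩ <;> simp only [hfil, hE] <;> nlinarith [hCnn]
      · intro ℓ hℓ1 hℓ2; omega
    | succ d ih =>
      intro hd
      obtain ⟨T, hT1, hT2⟩ := ih (by omega)
      have hℓ0 : 1 ≤ n - d := by omega
      obtain ⟨hcard, hi1, hi2⟩ := hT1 (n - d) le_rfl (by omega)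
      have hne : (T (n - d)).Nonempty := Finset.card_pos.mp (by omega)
      obtain ⟨v, hv, hs1, hs2⟩ := hyp_step hk1 H hk p hp0 hp1 (T (n - d)) hne
        (by omega) (by rw [hcard]; exact hi1) (by rw [hcard]; exact hi2)
      rw [hcard] at hs1 hs2
      refine ⟨fun m => if m < n - d then (T (n - d)).erase v else T m, ?_, ?_⟩
      · intro ℓ hℓ1 hℓ2
        by_cases hc : ℓ < n - d
        · have hℓeq : ℓ = n - d - 1 := by omega
          simp only [if_pos hc]
          have hce : ((T (n - d)).erase v).card = ℓ := by
            rw [Finset.card_erase_of_mem hv, hcard]; omega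
          refine ⟨hce, ?_, ?_⟩
          · rw [hℓeq]; exact hs1
          · rw [hℓeq]; exact hs2
        · simp only [if_neg hc]
          exact hT1 ℓ (by omega) hℓ2
      · intro ℓ hℓ1 hℓ2
        by_cases hc : ℓ < n - d
        · have hℓeq : ℓ + 1 = n - d := by omega
          simp only [if_pos hc, hℓeq, lt_irrefl, if_neg (lt_irrefl (n - d))]
          exact Finset.erase_subset v (T (n - d))
        · have hc' : ¬ (ℓ + 1 < n - d) := by omega
          simp only [if_neg hc, if_neg hc']
          exact hT2 ℓ (by omega) hℓ2
  obtain ⟨T, hT1, hT2⟩ := key n le_rfl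
  exact ⟨T, fun ℓ hℓ => (hT1 ℓ (by omega) hℓ).1, fun ℓ hℓ => hT2 ℓ (by omega) hℓ,
    fun ℓ hℓ => ⟨(hT1 ℓ (by omega) hℓ).2.1, (hT1 ℓ (by omega) hℓ).2.2⟩⟩

lemma hyp_card_filter_lt (n ℓ : ℕ) (hℓ : ℓ ≤ n) :
    ((Finset.univ : Finset (Fin n)).filter (fun i : Fin n => (i : ℕ) < ℓ)).card = ℓ := by
  have h : (Finset.univ : Finset (Fin n)).filter (fun i : Fin n => (i : ℕ) < ℓ)
      = (Finset.range ℓ).attachFin (fun m hm => lt_of_lt_of_le (Finset.mem_range.mp hm) hℓ) := by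
    ext i
    simp [Finset.mem_attachFin, Finset.mem_range]
  rw [h, Finset.card_attachFin, Finset.card_range]

theorem stmt_10 (k n : ℕ) (hk2 : 2 ≤ k) (H : Finset (Finset (Fin n)))
    (hk : ∀ e ∈ H, e.card = k) (p : ℝ)
    (hE : (H.card : ℝ) = p * (n.choose k)) :
    ∃ σ : Equiv.Perm (Fin n), ∀ ℓ : ℕ, 1 ≤ ℓ → ℓ ≤ n →
      (((H.filter (fun e => e ⊆ (Finset.univ.filter (fun i : Fin n => (i : ℕ) < ℓ)).image σ)).card : ℝ)
          - p * (ℓ.choose k) ≤ p * ((n - 1).choose (k - 1))) ∧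
      (p * (ℓ.choose k)
          - ((H.filter (fun e => e ⊆ (Finset.univ.filter (fun i : Fin n => (i : ℕ) < ℓ)).image σ)).card : ℝ)
          ≤ (1 - p) * ((n - 1).choose (k - 1))) := by
  classical
  rcases lt_or_ge n k with hnk | hkn
  · -- degenerate case: n < k, so H = ∅ and all binomials vanish
    have hHe : H = ∅ := by
      rw [Finset.eq_empty_iff_forall_notMem]
      intro A hA
      have h1 := hk A hA
      have h2 : A.card ≤ n := by
        simpa using Finset.card_le_card (Finset.subset_univ A)
      omega
    refine ⟨Equiv.refl _, fun ℓ h1 h2 => ?_⟩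
    have hc1 : ℓ.choose k = 0 := Nat.choose_eq_zero_of_lt (by omega)
    have hc2 : (n - 1).choose (k - 1) = 0 := Nat.choose_eq_zero_of_lt (by omega)
    subst hHe
    simp [hc1, hc2]
  · -- main case : k ≤ n
    have hk1 : 1 ≤ k := by omega
    have hCpos : (0:ℝ) < (n.choose k : ℝ) := by
      exact_mod_cast Nat.choose_pos hkn
    have hp0 : 0 ≤ p := by
      nlinarith [Nat.cast_nonneg (α := ℝ) H.card]
    have hcard_le : H.card ≤ n.choose k := by
      have hsub : H ⊆ Finset.powersetCard k Finset.univ := by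
        intro A hA
        rw [Finset.mem_powersetCard_univ]
        exact hk A hA
      have := Finset.card_le_card hsub
      rwa [Finset.card_powersetCard, Finset.card_univ, Fintype.card_fin] at this
    have hp1 : p ≤ 1 := by
      have : (H.card : ℝ) ≤ (n.choose k : ℝ) := by exact_mod_cast hcard_le
      nlinarith
    obtain ⟨T, hTcard, hTsub, hTineq⟩ := hyp_chain hk1 H hk p hp0 hp1 hE
    -- monotonicity of the chain
    have hmono : ∀ i j, i ≤ j → j ≤ n → T i ⊆ T j := by
      intro i j hij hj
      induction j with
      | zero =>
        have : i = 0 := by omega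
        subst this; exact subset_rfl
      | succ j ihj =>
        rcases Nat.lt_or_ge i (j+1) with h | h
        · exact (ihj (by omega) (by omega)).trans (hTsub j (by omega))
        · have : i = j + 1 := by omega
          subst this; exact subset_rfl
    -- the vertex added at step i
    have hsing : ∀ i : Fin n, ∃ x, T ((i : ℕ) + 1) \ T (i : ℕ) = {x} := by
      intro i
      rw [← Finset.card_eq_one, Finset.card_sdiff_of_subset (hTsub i i.isLt),
        hTcard _ i.isLt, hTcard _ (by omega)]
      omega
    choose a ha using hsing
    have hmem : ∀ i : Fin n, a i ∈ T ((i : ℕ) + 1) ∧ a i ∉ T (i : ℕ) := by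
      intro i
      have : a i ∈ T ((i : ℕ) + 1) \ T (i : ℕ) := by
        rw [ha i]; exact Finset.mem_singleton_self _
      exact Finset.mem_sdiff.mp this
    have hinj : Function.Injective a := by
      intro i j hij
      by_contra hne
      rcases lt_or_gt_of_ne (fun h => hne h) with h | h
      · have h1 : a i ∈ T ((j : ℕ)) := hmono ((i : ℕ) + 1) (j : ℕ) (by omega) (by omega) (hmem i).1
        rw [hij] at h1
        exact (hmem j).2 h1
      · have h1 : a j ∈ T ((i : ℕ)) := hmono ((j : ℕ) + 1) (i : ℕ) (by omega) (by omega) (hmem j).1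
        rw [← hij] at h1
        exact (hmem i).2 h1
    refine ⟨Equiv.ofBijective a (Finite.injective_iff_bijective.mp hinj), fun ℓ h1ℓ hℓn => ?_⟩
    have himg : (Finset.univ.filter (fun i : Fin n => (i : ℕ) < ℓ)).image
        (Equiv.ofBijective a (Finite.injective_iff_bijective.mp hinj)) = T ℓ := by
      apply Finset.eq_of_subset_of_card_le
      · intro x hx
        simp only [Finset.mem_image, Finset.mem_filter, Finset.mem_univ, true_and] at hx
        obtain ⟨i, hi, rfl⟩ := hx
        have : a i ∈ T ((i : ℕ) + 1) := (hmem i).1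
        exact hmono ((i : ℕ) + 1) ℓ (by omega) hℓn this
      · rw [Finset.card_image_of_injective _ (Equiv.injective _),
          hyp_card_filter_lt n ℓ hℓn, hTcard ℓ hℓn]
    rw [himg]
    exact hTineq ℓ hℓn
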